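/- In the digraph (V,→) of the positively expansive example (vertices indexed by ℕ, with edges: n+1 → n for circle vertices' copying, and m_{k+1} → m_k as well as m_k+1 → m_k for square vertices, where m_k = k(k+1)), every vertex v has connectivity dimension exactly 2: lim_{r→∞} log|B(v,r)|/log(r) = 2. In particular, for vertex □_0, the ball cardinality |B(□_0,r)| grows quadratically in r (bounded below and above by positive multiples of r²). -/

import Mathlib

open Filter Topology

/-- The ball of radius `r` around `v` in the digraph `E`. -/
def gBall {V : Type*} (E : V → V → Prop) (v : V) : ℕ → Set V
  | 0 => {v}
  | r + 1 => gBall E v r ∪ {u | ∃ w ∈ gBall E v r, E u w}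

/-- For `n = k(k+1)`, recovers `k`. -/
def kOf (n : ℕ) : ℕ := (Nat.sqrt (4 * n + 1) - 1) / 2

/-- The digraph of the positively expansive example: each square vertex `m_k = k(k+1)`
receives edges from `m_k + 1` and from the next square `m_{k+1}`; every circle vertex `n`
receives an edge from `n + 1`. -/
def exE (u w : ℕ) : Prop :=
  if kOf w * (kOf w + 1) = w then u = w + 1 ∨ u = (kOf w + 1) * (kOf w + 2)
  else u = w + 1

/-- Every vertex of the example digraph has connectivity dimension `2`; moreover the
ball cardinalities at vertex `□_0 = 0` grow quadratically. -/
lemma kOf_m (k : ℕ) : kOf (k * (k+1)) = k := by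
  unfold kOf
  have h : 4 * (k*(k+1)) + 1 = (2*k+1) * (2*k+1) := by ring
  rw [h, Nat.sqrt_eq]
  omega

lemma exE_succ (w : ℕ) : exE (w+1) w := by
  unfold exE; split
  · exact Or.inl rfl
  · rfl

lemma exE_jump (k : ℕ) : exE ((k+1)*((k+1)+1)) (k*(k+1)) := by
  unfold exE
  have hk := kOf_m k
  rw [if_pos (by rw [hk])]
  right; rw [hk]

lemma gBall_self {V : Type*} (E : V → V → Prop) (v : V) (r : ℕ) : v ∈ gBall E v r := by
  induction r with
  | zero => exact rfl
  | succ r ih => exact Or.inl ih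

lemma gBall_step {V : Type*} {E : V → V → Prop} {v u w : V} {r : ℕ}
    (h : w ∈ gBall E v r) (he : E u w) : u ∈ gBall E v (r+1) :=
  Or.inr ⟨w, h, he⟩

lemma gBall_mono {V : Type*} {E : V → V → Prop} {v : V} {r s : ℕ} (h : r ≤ s) :
    gBall E v r ⊆ gBall E v s := by
  induction s with
  | zero => rw [Nat.le_zero.mp h]
  | succ s ih =>
    rcases Nat.lt_or_ge r (s+1) with hl | hg
    · exact fun x hx => Or.inl (ih (Nat.lt_succ_iff.mp hl) hx)
    · rw [Nat.le_antisymm h hg]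

lemma gBall_add {v w r : ℕ} (h : w ∈ gBall exE v r) (d : ℕ) :
    w + d ∈ gBall exE v (r + d) := by
  induction d with
  | zero => exact h
  | succ d ih => exact (by omega : r + d + 1 = r + (d+1)) ▸ gBall_step ih (exE_succ _)

lemma gBall_sq (v i : ℕ) : (v+i) * ((v+i)+1) ∈ gBall exE v (v*v + i) := by
  induction i with
  | zero =>
    have := gBall_add (gBall_self exE v 0) (v*v)
    have e1 : v + v*v = (v+0)*((v+0)+1) := by ring
    have e2 : 0 + v*v = v*v + 0 := by ring
    rwa [e1, e2] at this
  | succ i ih =>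
    have := gBall_step ih (exE_jump (v+i))
    have e : v + i + 1 = v + (i+1) := by ring
    rwa [e] at this

lemma gBall_elt (v i s : ℕ) : (v+i) * ((v+i)+1) + s ∈ gBall exE v (v*v + i + s) :=
  gBall_add (gBall_sq v i) s

lemma kOf_le {k n : ℕ} (h : k * (k+1) ≤ n * (n+1)) : k ≤ n := by
  by_contra hc
  push_neg at hc
  nlinarith

lemma gBall_subset_Icc (v r : ℕ) : gBall exE v r ⊆ Set.Icc v ((v+r)*((v+r)+1)) := by
  induction r with
  | zero =>
    intro x hx
    rw [Set.mem_singleton_iff.mp hx]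
    exact ⟨le_refl v, by nlinarith⟩
  | succ r ih =>
    rintro x (hx | ⟨w, hw, he⟩)
    · rcases ih hx with ⟨h1, h2⟩
      exact ⟨h1, by nlinarith⟩
    · rcases ih hw with ⟨h1, h2⟩
      unfold exE at he
      split at he
      · rename_i hsq
        rcases he with rfl | rfl
        · constructor <;> nlinarith
        · have hk : kOf w ≤ v + r := kOf_le (by omega)
          constructor
          · nlinarith [hsq]
          · nlinarith [hk]
      · subst he
        constructor <;> nlinarith

lemma gBall_finite (v r : ℕ) : (gBall exE v r).Finite :=
  (Set.finite_Icc _ _).subset (gBall_subset_Icc v r)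

lemma gBall_card_le (v r : ℕ) : (gBall exE v r).ncard ≤ (v + r + 1)^2 := by
  have h := Set.ncard_le_ncard (gBall_subset_Icc v r) (Set.finite_Icc _ _)
  rw [← Finset.coe_Icc, Set.ncard_coe_finset, Nat.card_Icc] at h
  calc (gBall exE v r).ncard ≤ (v+r)*((v+r)+1) + 1 - v := h
    _ ≤ (v+r)*((v+r)+1) + 1 := Nat.sub_le _ _
    _ ≤ (v + r + 1)^2 := by nlinarith

lemma sum_gauss (h : ℕ) : 2 * (∑ i ∈ Finset.range (h+1), (i+1)) = (h+1)*(h+2) := by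
  induction h with
  | zero => rfl
  | succ h ih => rw [Finset.sum_range_succ, Nat.mul_add, ih]; ring

lemma gBall_card_ge (v r : ℕ) : (r - v*v)^2 ≤ 8 * (gBall exE v r).ncard := by
  rcases Nat.lt_or_ge r (v*v) with hlt | hge
  · have : r - v*v = 0 := by omega
    simp [this]
  set T := r - v*v with hT
  set h := T / 2 with hh
  set P : Finset ((_ : ℕ) × ℕ) := (Finset.range (h+1)).sigma (fun i => Finset.range (i+1)) with hP
  set f : (_ : ℕ) × ℕ → ℕ := fun p => (v + p.1) * ((v + p.1) + 1) + p.2 with hf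
  -- f is injective on P
  have key : ∀ p ∈ P, ∀ q ∈ P, p.1 < q.1 → f p < f q := by
    intro p hp q hq hlt'
    simp only [hP, Finset.mem_sigma, Finset.mem_range] at hp hq
    have hps : p.2 ≤ p.1 := by omega
    have : (v + p.1) * ((v + p.1) + 1) + p.2 < (v + p.1 + 1) * ((v + p.1 + 1) + 1) := by nlinarith
    have h2 : (v + p.1 + 1) * ((v + p.1 + 1) + 1) ≤ (v + q.1) * ((v + q.1) + 1) := by nlinarith
    simp only [hf]
    omega
  have hinj : Set.InjOn f P := by
    intro p hp q hq hfe
    rcases Nat.lt_trichotomy p.1 q.1 with hc | hc | hc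
    · exact absurd hfe (Nat.ne_of_lt (key p hp q hq hc))
    · have : p.2 = q.2 := by simp only [hf, hc] at hfe; omega
      exact Sigma.ext hc (heq_of_eq this)
    · exact absurd hfe.symm (Nat.ne_of_lt (key q hq p hp hc))
  have hsub : ↑(P.image f) ⊆ gBall exE v r := by
    intro x hx
    simp only [Finset.coe_image, Set.mem_image, Finset.mem_coe] at hx
    rcases hx with ⟨p, hp, rfl⟩
    simp only [hP, Finset.mem_sigma, Finset.mem_range] at hp
    have hmem := gBall_elt v p.1 p.2
    have hle : v*v + p.1 + p.2 ≤ r := by omega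
    exact gBall_mono hle hmem
  have hcard : (P.image f).card = P.card := Finset.card_image_of_injOn hinj
  have hPcard : 2 * P.card = (h+1)*(h+2) := by
    rw [hP, Finset.card_sigma]
    simp only [Finset.card_range]
    exact sum_gauss h
  have hle : (P.image f).card ≤ (gBall exE v r).ncard := by
    rw [← Set.ncard_coe_finset]
    exact Set.ncard_le_ncard hsub (gBall_finite v r)
  have h2h : T ≤ 2*h + 1 := by omega
  nlinarith [hle, hcard, hPcard]

lemma gBall_card_pos (v r : ℕ) : 0 < (gBall exE v r).ncard :=
  (Set.ncard_pos (gBall_finite v r)).mpr ⟨v, gBall_self _ _ _⟩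

theorem example_dimension_two :
    (∀ v : ℕ, Filter.Tendsto
        (fun r : ℕ => Real.log ((gBall exE v r).ncard) / Real.log r)
        Filter.atTop (nhds 2)) ∧
    ∃ c C : ℝ, 0 < c ∧ 0 < C ∧ ∀ᶠ r : ℕ in Filter.atTop,
      c * (r : ℝ) ^ 2 ≤ ((gBall exE 0 r).ncard : ℝ) ∧
      ((gBall exE 0 r).ncard : ℝ) ≤ C * (r : ℝ) ^ 2 := by
  have hlog : Filter.Tendsto (fun r : ℕ => Real.log r) Filter.atTop Filter.atTop :=
    Real.tendsto_log_atTop.comp tendsto_natCast_atTop_atTop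
  constructor
  · intro v
    apply tendsto_of_tendsto_of_tendsto_of_le_of_le'
      (g := fun r : ℕ => 2 - Real.log 32 / Real.log r)
      (h := fun r : ℕ => 2 + (2 * Real.log (v+2)) / Real.log r)
    · have h0 : Filter.Tendsto (fun r : ℕ => Real.log 32 / Real.log r) Filter.atTop (nhds 0) :=
        Filter.Tendsto.div_atTop tendsto_const_nhds hlog
      simpa using tendsto_const_nhds.sub h0
    · have h0 : Filter.Tendsto (fun r : ℕ => (2 * Real.log (v+2)) / Real.log r)
          Filter.atTop (nhds 0) := Filter.Tendsto.div_atTop tendsto_const_nhds hlog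
      simpa using tendsto_const_nhds.add h0
    · filter_upwards [Filter.eventually_ge_atTop (2*v*v + 2)] with r hr
      have hr2 : (2:ℕ) ≤ r := by omega
      have hrn : (2:ℝ) ≤ (r:ℝ) := by exact_mod_cast hr2
      have hlogpos : 0 < Real.log r := Real.log_pos (by linarith)
      -- nat bound: r^2 ≤ 32 * ncard
      have hnat : r^2 ≤ 32 * (gBall exE v r).ncard := by
        have h1 := gBall_card_ge v r
        set T := r - v*v with hTdef
        have hvv : 2*(v*v) + 2 ≤ r := by nlinarith
        have h2T : r ≤ 2*T := by omega
        nlinarith [h1, h2T]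
      have hN : ((r:ℝ))^2 / 32 ≤ ((gBall exE v r).ncard : ℝ) := by
        have : ((r:ℝ))^2 ≤ 32 * ((gBall exE v r).ncard : ℝ) := by exact_mod_cast hnat
        linarith
      have hNpos : (0:ℝ) < ((gBall exE v r).ncard : ℝ) := by
        exact_mod_cast gBall_card_pos v r
      have hlogN : 2 * Real.log r - Real.log 32 ≤ Real.log ((gBall exE v r).ncard : ℝ) := by
        have hx : (0:ℝ) < (r:ℝ)^2 / 32 := by positivity
        have := Real.log_le_log hx hN
        rw [Real.log_div (by positivity) (by norm_num), Real.log_pow] at this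
        push_cast at this
        linarith
      rw [sub_div' (ne_of_gt hlogpos)] at *
      rw [div_le_div_iff₀ hlogpos hlogpos]
      nlinarith [hlogN, hlogpos]
    · filter_upwards [Filter.eventually_ge_atTop 2] with r hr
      have hrn : (2:ℝ) ≤ (r:ℝ) := by exact_mod_cast hr
      have hlogpos : 0 < Real.log r := Real.log_pos (by linarith)
      have hNpos : (0:ℝ) < ((gBall exE v r).ncard : ℝ) := by
        exact_mod_cast gBall_card_pos v r
      have hnat : (gBall exE v r).ncard ≤ ((v+2) * r)^2 := by
        calc (gBall exE v r).ncard ≤ (v + r + 1)^2 := gBall_card_le v r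
          _ ≤ ((v+2) * r)^2 := Nat.pow_le_pow_left (by nlinarith [(by omega : 2 ≤ r)]) 2
      have hub : ((gBall exE v r).ncard : ℝ) ≤ (((v:ℝ)+2) * r)^2 := by exact_mod_cast hnat
      have hlogN : Real.log ((gBall exE v r).ncard : ℝ)
          ≤ 2 * Real.log ((v:ℝ)+2) + 2 * Real.log r := by
        have := Real.log_le_log hNpos hub
        rw [Real.log_pow, Real.log_mul (by positivity) (by positivity)] at this
        push_cast at this
        linarith
      rw [div_le_iff₀ hlogpos, add_mul, div_mul_cancel₀ _ (ne_of_gt hlogpos)]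
      linarith
  · refine ⟨1/32, 4, by norm_num, by norm_num, ?_⟩
    filter_upwards [Filter.eventually_ge_atTop 1] with r hr
    constructor
    · have h1 := gBall_card_ge 0 r
      simp only [Nat.mul_zero, Nat.zero_mul, Nat.sub_zero] at h1
      have : ((r:ℝ))^2 ≤ 8 * ((gBall exE 0 r).ncard : ℝ) := by exact_mod_cast h1
      linarith
    · have h1 : (gBall exE 0 r).ncard ≤ 4 * r^2 := by
        calc (gBall exE 0 r).ncard ≤ (0 + r + 1)^2 := gBall_card_le 0 r
          _ ≤ 4 * r^2 := by nlinarith [(by omega : 1 ≤ r)]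
      have : ((gBall exE 0 r).ncard : ℝ) ≤ 4 * (r:ℝ)^2 := by exact_mod_cast h1
      linarith
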